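/- Let V be a finite-dimensional vector space over an algebraically closed field k of characteristic p > 0, and F : V → V a p-linear map (F(λv) = λ^p F(v)). Let V^F = {v ∈ V : F(v) = v} be the set of fixed vectors and V^s = ∩_{i>0} im(F^i). Then V^F is an F_p-vector space and dim_k V^s = dim_{F_p} V^F. -/

import Mathlib

open Polynomial Finset

section Aux

variable {k : Type} [Field k] {p : ℕ} [Fact p.Prime] [CharP k p]

/-- The fixed scalars of Frobenius in `k` number exactly `p`. -/
lemma card_fixed_scalars : Nat.card {s : k // s ^ p = s} = p := by
  have hp : 1 < p := (Fact.out : p.Prime).one_lt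
  let φ : ZMod p →+* k := ZMod.castHom dvd_rfl k
  have hne : (X ^ p - X : k[X]) ≠ 0 := FiniteField.X_pow_card_sub_X_ne_zero k hp
  have hmap : (X ^ p - X : (ZMod p)[X]).map φ = (X ^ p - X : k[X]) := by
    simp [Polynomial.map_sub, Polynomial.map_pow]
  have hroots0 : (X ^ p - X : (ZMod p)[X]).roots = Finset.univ.val := by
    have := FiniteField.roots_X_pow_card_sub_X (ZMod p)
    rwa [ZMod.card] at this
  have hroots : (X ^ p - X : k[X]).roots = Finset.univ.val.map φ := by
    rw [← hmap, ← Polynomial.roots_map_of_injective_of_card_eq_natDegree φ.injective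
      (by rw [hroots0, FiniteField.X_pow_card_sub_X_natDegree_eq _ hp]; simp),
      hroots0]
  have hbij : Function.Bijective (fun a : ZMod p =>
      (⟨φ a, by rw [← map_pow, ZMod.pow_card]⟩ : {s : k // s ^ p = s})) := by
    constructor
    · intro a b hab
      exact φ.injective (congrArg Subtype.val hab)
    · rintro ⟨s, hs⟩
      have hsr : s ∈ (X ^ p - X : k[X]).roots := by
        rw [mem_roots hne]
        simp [IsRoot, hs]
      rw [hroots, Multiset.mem_map] at hsr
      obtain ⟨a, -, ha⟩ := hsr
      exact ⟨a, Subtype.ext ha⟩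
  rw [← (Nat.card_congr (Equiv.ofBijective _ hbij)), Nat.card_zmod]

variable {U : Type} [AddCommGroup U] [Module k U]

/-- independence from non-membership of spans of predecessors -/
lemma aux_indep {n : ℕ} (w : ℕ → U)
    (hw : ∀ j, j < n → w j ∉ Submodule.span k (w '' Set.Iio j))
    (x : ℕ → k) (hx : ∑ i ∈ Finset.range n, x i • w i = 0) :
    ∀ i, i < n → x i = 0 := by
  induction n with
  | zero => intro i hi; omega
  | succ n ih =>
    rw [Finset.sum_range_succ] at hx
    have hn : x n = 0 := by
      by_contra hxn
      apply hw n (Nat.lt_succ_self n)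
      have h1 : x n • w n = -∑ i ∈ Finset.range n, x i • w i :=
        eq_neg_of_add_eq_zero_left (by rw [add_comm] at hx; exact hx)
      have h2 : w n = (x n)⁻¹ • -∑ i ∈ Finset.range n, x i • w i := by
        rw [← h1, smul_smul, inv_mul_cancel₀ hxn, one_smul]
      rw [h2]
      refine Submodule.smul_mem _ _ (Submodule.neg_mem _ (Submodule.sum_mem _ fun i hi => ?_))
      exact Submodule.smul_mem _ _
        (Submodule.subset_span ⟨i, Finset.mem_range.mp hi, rfl⟩)
    rw [hn, zero_smul, add_zero] at hx
    intro i hi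
    rcases Nat.lt_succ_iff_lt_or_eq.mp hi with h | h
    · exact ih (fun j hj => hw j (hj.trans (Nat.lt_succ_self n))) hx i h
    · rwa [h]

end Aux

section Pchain

variable {k : Type} [Field k] {p : ℕ} [Fact p.Prime] [CharP k p]

/-- the chain of polynomials used to solve for a fixed vector -/
noncomputable def Pchain (a : ℕ → k) (p : ℕ) : ℕ → k[X]
  | 0 => C (a 0) * X ^ p
  | (j + 1) => (Pchain a p j) ^ p + C (a (j + 1)) * X ^ p

lemma Pchain_natDegree (a : ℕ → k) (ha : a 0 ≠ 0) (j : ℕ) :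
    (Pchain a p j).natDegree = p ^ (j + 1) := by
  have hp : 1 < p := (Fact.out : p.Prime).one_lt
  induction j with
  | zero => simpa [Pchain] using natDegree_C_mul_X_pow p (a 0) ha
  | succ j ih =>
    rw [Pchain, natDegree_add_eq_left_of_natDegree_lt, natDegree_pow, ih]
    · ring
    · rw [natDegree_pow, ih]
      calc (C (a (j + 1)) * X ^ p).natDegree ≤ p := natDegree_C_mul_X_pow_le _ _
        _ < p * p ^ (j + 1) := by
            have h1 : 1 < p ^ (j+1) := Nat.one_lt_pow (Nat.succ_ne_zero j) hp
            calc p = 1 * p := (one_mul p).symm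
              _ < p ^ (j+1) * p := by
                  exact Nat.mul_lt_mul_of_lt_of_le h1 le_rfl (by omega)
              _ = p * p ^ (j+1) := by ring
  done

lemma Pchain_derivative (a : ℕ → k) (j : ℕ) :
    derivative (Pchain a p j) = 0 := by
  have h0 : ((p : k[X])) = 0 := by
    rw [← Polynomial.C_eq_natCast, CharP.cast_eq_zero k p, map_zero]
  induction j with
  | zero =>
    simp [Pchain, derivative_C_mul, derivative_X_pow, h0]
  | succ j ih =>
    simp [Pchain, derivative_C_mul, derivative_X_pow, derivative_pow, ih, h0]

end Pchain

section Root

variable {k : Type} [Field k] [IsAlgClosed k] {p : ℕ} [Fact p.Prime] [CharP k p]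

/-- the key polynomial equation has a nonzero solution -/
lemma exists_nonzero_root [DecidableEq k] (a : ℕ → k) (ha : a 0 ≠ 0) (m : ℕ) :
    ∃ t : k, t ≠ 0 ∧ (Pchain a p m).eval t = t := by
  have hp : 1 < p := (Fact.out : p.Prime).one_lt
  set Q : k[X] := X - Pchain a p m with hQ
  have hdegP : (Pchain a p m).natDegree = p ^ (m + 1) := Pchain_natDegree a ha m
  have hpm : 1 < p ^ (m + 1) := Nat.one_lt_pow (Nat.succ_ne_zero m) hp
  have hQdeg : Q.natDegree = p ^ (m + 1) := by
    rw [hQ, natDegree_sub_eq_right_of_natDegree_lt, hdegP]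
    rw [natDegree_X, hdegP]; exact hpm
  have hQne : Q ≠ 0 := ne_zero_of_natDegree_gt (n := 0) (by omega)
  have hQderiv : derivative Q = 1 := by
    rw [hQ, derivative_sub, derivative_X, Pchain_derivative, sub_zero]
  have hcard : Multiset.card Q.roots = p ^ (m + 1) := by
    rw [← hQdeg]
    exact (splits_iff_card_roots.mp (IsAlgClosed.splits Q))
  have hcount : Multiset.count 0 Q.roots ≤ 1 := by
    by_contra hc
    push_neg at hc
    have h2 : (X - C (0:k)) ^ 2 ∣ Q := by
      refine dvd_trans (pow_dvd_pow _ ?_) (Q.pow_rootMultiplicity_dvd 0)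
      rw [← Polynomial.count_roots]; omega
    obtain ⟨S, hS⟩ := h2
    have : (1 : k[X]).eval 0 = (derivative ((X - C (0:k)) ^ 2 * S)).eval 0 := by
      rw [← hS, hQderiv]
    simp [derivative_mul, derivative_pow] at this
  have hex : ∃ t ∈ Q.roots, t ≠ 0 := by
    by_contra hall
    push_neg at hall
    have : Multiset.count 0 Q.roots = Multiset.card Q.roots :=
      Multiset.count_eq_card.mpr (fun b hb => (hall b hb).symm)
    omega
  obtain ⟨t, htmem, htne⟩ := hex
  refine ⟨t, htne, ?_⟩
  have := (Polynomial.mem_roots hQne).mp htmem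
  rw [IsRoot, hQ, eval_sub, eval_X, sub_eq_zero] at this
  exact this.symm

end Root

section Fixed

variable {k : Type} [Field k] [IsAlgClosed k] {p : ℕ} [Fact p.Prime] [CharP k p]
variable {U : Type} [AddCommGroup U] [Module k U]

lemma exists_fixed_ne_zero [FiniteDimensional k U]
    (G : U →+ U) (hG : ∀ (c : k) (v : U), G (c • v) = c ^ p • G v)
    (hinj : ∀ u : U, G u = 0 → u = 0)
    {v : U} (hv : v ≠ 0) :
    ∃ u : U, G u = u ∧ u ≠ 0 := by
  classical
  set w : ℕ → U := fun i => (⇑G)^[i] v with hw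
  have hwsucc : ∀ j, G (w j) = w (j + 1) := fun j =>
    (Function.iterate_succ_apply' (⇑G) j v).symm
  set T : ℕ → Submodule k U := fun j => Submodule.span k (w '' Set.Iio j) with hT
  have hTmono : Monotone T := fun a b hab =>
    Submodule.span_mono (Set.image_mono (Set.Iio_subset_Iio hab))
  have hex : ∃ j, w j ∈ T j := by
    obtain ⟨n0, hn0⟩ := monotone_stabilizes_iff_noetherian.mpr inferInstance ⟨T, hTmono⟩
    refine ⟨n0, ?_⟩
    have h1 : w n0 ∈ T (n0 + 1) :=
      Submodule.subset_span ⟨n0, Nat.lt_succ_self n0, rfl⟩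
    have h2 := hn0 (n0 + 1) (Nat.le_succ n0)
    simp only [OrderHom.coe_mk] at h2
    rwa [← h2] at h1
  have hmem : w (Nat.find hex) ∈ T (Nat.find hex) := Nat.find_spec hex
  have hmin : ∀ j, j < Nat.find hex → w j ∉ T j := fun j hj => Nat.find_min hex hj
  have hm1 : 1 ≤ Nat.find hex := by
    rcases Nat.eq_zero_or_pos (Nat.find hex) with h | h
    · exfalso
      rw [h] at hmem
      have h0 : Set.Iio (0 : ℕ) = ∅ := by ext x; simp
      change w 0 ∈ Submodule.span k (w '' Set.Iio 0) at hmem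
      rw [h0, Set.image_empty, Submodule.span_empty, Submodule.mem_bot] at hmem
      exact hv hmem
    · exact h
  obtain ⟨m', hm'⟩ : ∃ m', Nat.find hex = m' + 1 :=
    ⟨Nat.find hex - 1, (Nat.succ_pred_eq_of_pos hm1).symm⟩
  set m := m' + 1 with hmm
  rw [hm'] at hmem hmin
  -- extract coefficients
  have himg : w '' Set.Iio m = Set.range (fun i : Fin m => w i) := by
    ext u
    constructor
    · rintro ⟨i, hi, rfl⟩; exact ⟨⟨i, hi⟩, rfl⟩
    · rintro ⟨i, rfl⟩; exact ⟨i, i.isLt, rfl⟩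
  change w m ∈ Submodule.span k (w '' Set.Iio m) at hmem
  rw [himg, Submodule.mem_span_range_iff_exists_fun] at hmem
  obtain ⟨c, hc⟩ := hmem
  set a : ℕ → k := fun i => if h : i < m then c ⟨i, h⟩ else 0 with haa
  have ha : ∑ i ∈ Finset.range m, a i • w i = w m := by
    rw [Finset.sum_range fun i => a i • w i]
    rw [← hc]
    apply Finset.sum_congr rfl
    intro i _
    simp [haa, i.isLt]
  -- a 0 ≠ 0
  have ha0 : a 0 ≠ 0 := by
    intro h0
    choose b hb using fun i => surjective_frobenius k p (a i)
    have hbp : ∀ i, (b i) ^ p = a i := fun i => by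
      have := hb i; rwa [frobenius_def] at this
    set u := w m' - ∑ i ∈ Finset.range m', b (i + 1) • w i with hu
    have hGu : G u = 0 := by
      rw [hu, map_sub, map_sum, hwsucc]
      have h1 : ∀ i ∈ Finset.range m', G (b (i + 1) • w i) = a (i + 1) • w (i + 1) := by
        intro i _
        rw [hG, hbp, hwsucc]
      rw [Finset.sum_congr rfl h1]
      have h2 : w m = ∑ i ∈ Finset.range m', a (i + 1) • w (i + 1) := by
        rw [← ha, Finset.sum_range_succ' (fun i => a i • w i) m', h0, zero_smul, add_zero]
      rw [← hmm, ← h2, sub_self]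
    have := hinj u hGu
    rw [hu, sub_eq_zero] at this
    refine hmin m' (Nat.lt_succ_self m') ?_
    rw [this]
    refine Submodule.sum_mem _ fun i hi => Submodule.smul_mem _ _
      (Submodule.subset_span ⟨i, Finset.mem_range.mp hi, rfl⟩)
  -- solve the polynomial system
  obtain ⟨t, htne, htroot⟩ := exists_nonzero_root (p := p) a ha0 m'
  set x : ℕ → k := fun i => (Pchain a p i).eval t with hx
  have hxlast : x m' = t := htroot
  set u := ∑ i ∈ Finset.range m, x i • w i with hu
  have hne : u ≠ 0 := by
    intro h0
    have := aux_indep w hmin x h0 m' (Nat.lt_succ_self m')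
    rw [hxlast] at this
    exact htne this
  refine ⟨u, ?_, hne⟩
  -- G u = u
  have hGu : G u = ∑ i ∈ Finset.range m, (x i ^ p) • w (i + 1) := by
    rw [hu, map_sum]
    exact Finset.sum_congr rfl fun i _ => by rw [hG, hwsucc]
  rw [hGu, Finset.sum_range_succ (fun i => (x i ^ p) • w (i + 1)) m']
  rw [hxlast, ← hmm, ← ha, Finset.smul_sum]
  have h3 : ∀ j ∈ Finset.range m, t ^ p • (a j • w j) = (t ^ p * a j) • w j := by
    intro j _; rw [smul_smul]
  rw [Finset.sum_congr rfl h3]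
  rw [Finset.sum_range_succ' (fun j => (t ^ p * a j) • w j) m']
  rw [← add_assoc, ← Finset.sum_add_distrib]
  have h4 : ∀ i ∈ Finset.range m', x i ^ p • w (i + 1) + (t ^ p * a (i + 1)) • w (i + 1)
      = x (i + 1) • w (i + 1) := by
    intro i _
    rw [← add_smul]
    congr 1
    rw [hx]
    show x i ^ p + t ^ p * a (i + 1) = (Pchain a p (i + 1)).eval t
    rw [Pchain]
    simp only [eval_add, eval_mul, eval_pow, eval_C, eval_X]
    ring
  rw [Finset.sum_congr rfl h4]
  have h5 : (t ^ p * a 0) • w 0 = x 0 • w 0 := by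
    congr 1
    show t ^ p * a 0 = (Pchain a p 0).eval t
    rw [Pchain]
    simp only [eval_mul, eval_pow, eval_C, eval_X]
    ring
  rw [h5, hu, Finset.sum_range_succ' (fun i => x i • w i) m']

end Fixed

section Key

variable {k : Type} [Field k] [IsAlgClosed k] {p : ℕ} [Fact p.Prime] [CharP k p]

lemma key_count : ∀ (n : ℕ) (U : Type) [AddCommGroup U] [Module k U] [FiniteDimensional k U]
    (G : U →+ U), (∀ (c : k) (v : U), G (c • v) = c ^ p • G v) →
    (∀ u : U, G u = 0 → u = 0) → Function.Surjective G →
    Module.finrank k U = n →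
    Nat.card {u : U // G u = u} = p ^ n := by
  intro n
  induction n with
  | zero =>
    intro U _ _ _ G hG hinj hsurj hn
    haveI : Subsingleton U := Module.finrank_zero_iff.mp hn
    haveI : Unique {u : U // G u = u} :=
      ⟨⟨⟨0, map_zero G⟩⟩, fun x => Subtype.ext (Subsingleton.elim _ _)⟩
    simp [Nat.card_unique]
  | succ n ih =>
    intro U _ _ _ G hG hinj hsurj hn
    classical
    have hp : 1 < p := (Fact.out : p.Prime).one_lt
    haveI : Nontrivial U := Module.finrank_pos_iff (R := k).mp (by omega)
    obtain ⟨v, hv⟩ := exists_ne (0 : U)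
    obtain ⟨u₁, hu₁fix, hu₁ne⟩ := exists_fixed_ne_zero (p := p) G hG hinj hv
    set S : Submodule k U := Submodule.span k {u₁} with hS
    have hu₁S : u₁ ∈ S := Submodule.mem_span_singleton_self u₁
    let Gl : U →ₛₗ[frobenius k p] U :=
      { toFun := G, map_add' := fun a b => map_add G a b,
        map_smul' := fun c u => by
          show G (c • u) = (frobenius k p c) • G u
          rw [hG, frobenius_def] }
    have hle : S ≤ S.comap Gl := by
      rw [hS, Submodule.span_le]
      intro y hy
      rcases Set.mem_singleton_iff.mp hy with rfl
      show Gl y ∈ S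
      show G y ∈ S
      rw [hu₁fix]
      exact hu₁S
    set Gq := Submodule.mapQ S S Gl hle with hGqdef
    have hq_mk : ∀ u : U, Gq (Submodule.Quotient.mk u) = Submodule.Quotient.mk (G u) :=
      fun u => rfl
    set Gq' : (U ⧸ S) →+ (U ⧸ S) := Gq.toAddMonoidHom with hGq'def
    have hGq'app : ∀ x, Gq' x = Gq x := fun x => rfl
    have hGqsc : ∀ (c : k) (x : U ⧸ S), Gq' (c • x) = c ^ p • Gq' x := by
      intro c x
      rw [hGq'app, hGq'app, LinearMap.map_smulₛₗ, frobenius_def]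
    have hGqinj : ∀ x : U ⧸ S, Gq' x = 0 → x = 0 := by
      intro x hx
      obtain ⟨u, rfl⟩ := Submodule.Quotient.mk_surjective S x
      rw [hGq'app, hq_mk, Submodule.Quotient.mk_eq_zero] at hx
      obtain ⟨c, hc⟩ := Submodule.mem_span_singleton.mp hx
      obtain ⟨d, hd⟩ := surjective_frobenius k p c
      rw [frobenius_def] at hd
      have h1 : G (u - d • u₁) = 0 := by
        rw [map_sub, hG, hd, hu₁fix, hc, sub_self]
      have h2 := hinj _ h1
      rw [sub_eq_zero] at h2
      rw [Submodule.Quotient.mk_eq_zero, h2]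
      exact Submodule.smul_mem _ _ hu₁S
    have hGqsurj : Function.Surjective Gq' := by
      intro x
      obtain ⟨u, rfl⟩ := Submodule.Quotient.mk_surjective S x
      obtain ⟨u', hu'⟩ := hsurj u
      exact ⟨Submodule.Quotient.mk u', by rw [hGq'app, hq_mk, hu']⟩
    have hS1 : Module.finrank k S = 1 := finrank_span_singleton hu₁ne
    have hfr : Module.finrank k (U ⧸ S) = n := by
      have := Submodule.finrank_quotient_add_finrank S
      omega
    have hcardq := ih (U ⧸ S) Gq' hGqsc hGqinj hGqsurj hfr
    -- the fibration over the fixed points downstairs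
    set Fix := {u : U // G u = u} with hFix
    set FixQ := {x : U ⧸ S // Gq' x = x} with hFixQ
    set π : Fix → FixQ := fun u => ⟨Submodule.Quotient.mk u.1, by
      show Gq' (Submodule.Quotient.mk u.1) = _
      rw [hGq'app, hq_mk, u.2]⟩ with hπ
    have hmku₁ : Submodule.Quotient.mk u₁ = (0 : U ⧸ S) :=
      (Submodule.Quotient.mk_eq_zero S).mpr hu₁S
    have hfib : ∀ q : FixQ, Nat.card {u : Fix // π u = q} = p := by
      intro q
      obtain ⟨w₀, hw₀⟩ := Submodule.Quotient.mk_surjective S q.1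
      have hq2 : (Submodule.Quotient.mk (G w₀) : U ⧸ S) = Submodule.Quotient.mk w₀ := by
        have h := q.2
        rw [hGq'app, ← hw₀, hq_mk] at h
        rw [h, hw₀]
      have hc : G w₀ - w₀ ∈ S := (Submodule.Quotient.eq S).mp hq2
      obtain ⟨c, hc2⟩ := Submodule.mem_span_singleton.mp hc
      -- find t with t ^ p - t + c = 0
      have hdeg1 : ((X : k[X]) ^ p - X).degree = (p : WithBot ℕ) := by
        rw [degree_sub_eq_left_of_degree_lt, degree_X_pow]
        rw [degree_X_pow, degree_X]
        exact_mod_cast hp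
      have hdeg : ((X : k[X]) ^ p - X + C c).degree ≠ 0 := by
        rw [degree_add_eq_left_of_degree_lt, hdeg1]
        · exact_mod_cast (by omega : p ≠ 0)
        · rw [hdeg1]
          exact lt_of_le_of_lt degree_C_le (by exact_mod_cast (by omega : 0 < p))
      obtain ⟨t, ht⟩ := IsAlgClosed.exists_root _ hdeg
      have ht' : t ^ p - t + c = 0 := by
        have := ht
        rwa [IsRoot, eval_add, eval_sub, eval_pow, eval_X, eval_C] at this
      set u₀ := w₀ + t • u₁ with hu₀
      have hu₀fix : G u₀ = u₀ := by
        rw [hu₀, map_add, hG, hu₁fix]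
        have hGw₀ : G w₀ = w₀ + c • u₁ := by
          rw [hc2]; abel
        rw [hGw₀, add_assoc, ← add_smul]
        have : c + t ^ p = t := by linear_combination ht'
        rw [this]
      have hu₀mk : Submodule.Quotient.mk u₀ = q.1 := by
        rw [hu₀, Submodule.Quotient.mk_add, Submodule.Quotient.mk_smul, hmku₁,
          smul_zero, add_zero, hw₀]
      -- the fiber over q is in bijection with fixed scalars
      have hbij : Function.Bijective (fun s : {s : k // s ^ p = s} =>
          (⟨⟨u₀ + s.1 • u₁, by rw [map_add, hG, hu₁fix, hu₀fix, s.2]⟩, by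
            apply Subtype.ext
            show Submodule.Quotient.mk _ = q.1
            rw [Submodule.Quotient.mk_add, Submodule.Quotient.mk_smul, hmku₁,
              smul_zero, add_zero, hu₀mk]⟩ : {u : Fix // π u = q})) := by
        constructor
        · intro s s' hss
          have h1 : u₀ + s.1 • u₁ = u₀ + s'.1 • u₁ :=
            congrArg (fun z => z.1.1) hss
          have h2 : s.1 • u₁ = s'.1 • u₁ := by
            exact add_left_cancel h1
          have h3 : (s.1 - s'.1) • u₁ = 0 := by rw [sub_smul, h2, sub_self]
          rcases smul_eq_zero.mp h3 with h | h
          · exact Subtype.ext (sub_eq_zero.mp h)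
          · exact absurd h hu₁ne
        · rintro ⟨⟨u, hufix⟩, hπu⟩
          have hmk : Submodule.Quotient.mk u = q.1 := congrArg Subtype.val hπu
          have hmem : u - u₀ ∈ S := by
            rw [← hu₀mk] at hmk
            exact (Submodule.Quotient.eq S).mp hmk
          obtain ⟨s, hs⟩ := Submodule.mem_span_singleton.mp hmem
          have hfix2 : G (s • u₁) = s • u₁ := by
            rw [hs, map_sub, hufix, hu₀fix]
          rw [hG, hu₁fix] at hfix2
          have hsp : s ^ p = s := by
            have h3 : (s ^ p - s) • u₁ = 0 := by rw [sub_smul, hfix2, sub_self]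
            rcases smul_eq_zero.mp h3 with h | h
            · exact sub_eq_zero.mp h
            · exact absurd h hu₁ne
          refine ⟨⟨s, hsp⟩, ?_⟩
          apply Subtype.ext
          apply Subtype.ext
          show u₀ + s • u₁ = u
          rw [hs]; abel
      rw [← Nat.card_congr (Equiv.ofBijective _ hbij)]
      exact card_fixed_scalars
    -- assemble the count
    haveI hfinQ : Finite FixQ := Nat.finite_of_card_ne_zero (by rw [hcardq]; positivity)
    haveI hfinfib : ∀ q : FixQ, Finite {u : Fix // π u = q} := fun q =>
      Nat.finite_of_card_ne_zero (by rw [hfib q]; omega)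
    haveI : Finite Fix := Finite.of_equiv _ (Equiv.sigmaFiberEquiv π)
    letI : Fintype FixQ := Fintype.ofFinite _
    letI : ∀ q : FixQ, Fintype {u : Fix // π u = q} := fun q => Fintype.ofFinite _
    have h1 : Nat.card Fix = ∑ q : FixQ, Fintype.card {u : Fix // π u = q} := by
      rw [Nat.card_congr (Equiv.sigmaFiberEquiv π).symm, Nat.card_eq_fintype_card]
      exact Fintype.card_sigma
    have h2 : ∀ q : FixQ, Fintype.card {u : Fix // π u = q} = p := fun q => by
      rw [← Nat.card_eq_fintype_card]; exact hfib q
    rw [h1, Finset.sum_congr rfl (fun q _ => h2 q), Finset.sum_const, Finset.card_univ,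
      smul_eq_mul, ← Nat.card_eq_fintype_card, hcardq, pow_succ]

end Key

section Chains

variable {k : Type} [Field k] {V : Type} [AddCommGroup V] [Module k V]
variable {φ : k →+* k} [RingHomSurjective φ]

/-- the chain of images of iterates of a semilinear map -/
def imChain (Fl : V →ₛₗ[φ] V) : ℕ → Submodule k V
  | 0 => ⊤
  | (i + 1) => (imChain Fl i).map Fl

/-- the chain of kernels of iterates of a semilinear map -/
def kerChain (Fl : V →ₛₗ[φ] V) : ℕ → Submodule k V
  | 0 => ⊥
  | (i + 1) => (kerChain Fl i).comap Fl

lemma mem_imChain (Fl : V →ₛₗ[φ] V) (i : ℕ) (v : V) :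
    v ∈ imChain Fl i ↔ ∃ u, (⇑Fl)^[i] u = v := by
  induction i generalizing v with
  | zero => simp [imChain]
  | succ i ih =>
    simp only [imChain, Submodule.mem_map]
    constructor
    · rintro ⟨u, hu, rfl⟩
      obtain ⟨z, rfl⟩ := (ih u).mp hu
      exact ⟨z, (Function.iterate_succ_apply' (⇑Fl) i z)⟩
    · rintro ⟨z, rfl⟩
      exact ⟨(⇑Fl)^[i] z, (ih _).mpr ⟨z, rfl⟩, (Function.iterate_succ_apply' (⇑Fl) i z).symm⟩

lemma mem_kerChain (Fl : V →ₛₗ[φ] V) (i : ℕ) (v : V) :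
    v ∈ kerChain Fl i ↔ (⇑Fl)^[i] v = 0 := by
  induction i generalizing v with
  | zero => simp [kerChain]
  | succ i ih =>
    simp only [kerChain, Submodule.mem_comap]
    rw [ih (Fl v), Function.iterate_succ_apply]

lemma imChain_antitone (Fl : V →ₛₗ[φ] V) : Antitone (imChain Fl) := by
  apply antitone_nat_of_succ_le
  intro i
  induction i with
  | zero => exact le_top
  | succ i ih => exact Submodule.map_mono ih

lemma kerChain_monotone (Fl : V →ₛₗ[φ] V) : Monotone (kerChain Fl) := by
  apply monotone_nat_of_le_succ
  intro i
  induction i with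
  | zero => exact bot_le
  | succ i ih => exact Submodule.comap_mono ih

lemma imChain_stab [FiniteDimensional k V] (Fl : V →ₛₗ[φ] V) :
    ∃ N, ∀ i, N ≤ i → imChain Fl i = imChain Fl N := by
  set g : ℕ → ℕ := fun i => Module.finrank k (imChain Fl i) with hg
  have hne : (Set.range g).Nonempty := ⟨g 0, 0, rfl⟩
  obtain ⟨N, hN⟩ := Nat.sInf_mem hne
  refine ⟨N, fun i hi => ?_⟩
  refine Submodule.eq_of_le_of_finrank_le (imChain_antitone Fl hi) ?_
  show g N ≤ g i
  rw [hN]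
  exact Nat.sInf_le ⟨i, rfl⟩

lemma kerChain_stab [FiniteDimensional k V] (Fl : V →ₛₗ[φ] V) :
    ∃ N, ∀ i, N ≤ i → kerChain Fl i = kerChain Fl N := by
  obtain ⟨N, hN⟩ := monotone_stabilizes_iff_noetherian.mpr inferInstance
    ⟨kerChain Fl, kerChain_monotone Fl⟩
  exact ⟨N, fun i hi => by
    have := hN i hi
    simp only [OrderHom.coe_mk] at this
    exact this.symm⟩

end Chains

/-- for a `p`-linear map `F` on a finite dimensional vector space
`V` over an algebraically closed field of characteristic `p > 0`, the fixed
points `V^F` form an `𝔽_p`-vector space (in particular an additive subgroup,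
which in characteristic `p` is the same thing), the stable image
`V^s = ∩_i im(F^i)` is a `k`-subspace, and `dim_k V^s = dim_{𝔽_p} V^F`,
i.e. `|V^F| = p ^ dim_k V^s`. -/
theorem stmt9 {k : Type} [Field k] [IsAlgClosed k] {p : ℕ} [Fact p.Prime] [CharP k p]
    {V : Type} [AddCommGroup V] [Module k V] [FiniteDimensional k V]
    (F : V →+ V) (hF : ∀ (c : k) (v : V), F (c • v) = c ^ p • F v) :
    (∃ VF : AddSubgroup V, (VF : Set V) = {v : V | F v = v}) ∧
    (∃ W : Submodule k V, (W : Set V) = {v : V | ∀ i : ℕ, ∃ w : V, (⇑F)^[i] w = v} ∧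
      Nat.card {v : V // F v = v} = p ^ Module.finrank k W) := by
  classical
  constructor
  · exact ⟨AddMonoidHom.eqLocus F (AddMonoidHom.id V), rfl⟩
  · haveI : RingHomSurjective (frobenius k p) := ⟨surjective_frobenius k p⟩
    set Fl : V →ₛₗ[frobenius k p] V :=
      { toFun := F, map_add' := fun a b => map_add F a b,
        map_smul' := fun c u => by
          show F (c • u) = (frobenius k p c) • F u
          rw [hF, frobenius_def] } with hFl
    have hFlapp : ∀ v : V, Fl v = F v := fun v => rfl
    have hFlit : ∀ (i : ℕ) (v : V), (⇑Fl)^[i] v = (⇑F)^[i] v := fun i v => rfl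
    obtain ⟨nR, hnR⟩ := imChain_stab Fl
    obtain ⟨nK, hnK⟩ := kerChain_stab Fl
    set N := nR + nK with hN
    set W := imChain Fl N with hW
    have hWle : ∀ i, W ≤ imChain Fl i := by
      intro i
      rcases le_or_gt i N with h | h
      · exact imChain_antitone Fl h
      · rw [hnR i (by omega), ← hnR N (by omega)]
    have hWset : (W : Set V) = {v : V | ∀ i : ℕ, ∃ w : V, (⇑F)^[i] w = v} := by
      ext v
      constructor
      · intro hv i
        obtain ⟨u, hu⟩ := (mem_imChain Fl i v).mp (hWle i hv)
        exact ⟨u, hu⟩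
      · intro hv
        obtain ⟨u, hu⟩ := hv N
        exact (mem_imChain Fl N v).mpr ⟨u, hu⟩
    have hWmapeq : W.map Fl = W := by
      show imChain Fl (N + 1) = imChain Fl N
      rw [hnR (N + 1) (by omega), hnR N (by omega)]
    have hWmem : ∀ u ∈ W, F u ∈ W := by
      intro u hu
      rw [← hWmapeq]
      exact Submodule.mem_map_of_mem hu
    have hWsurj : ∀ w ∈ W, ∃ u ∈ W, F u = w := by
      intro w hw
      rw [← hWmapeq] at hw
      obtain ⟨u, hu, huw⟩ := Submodule.mem_map.mp hw
      exact ⟨u, hu, huw⟩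
    have hkerstab : kerChain Fl (N + 1) = kerChain Fl N := by
      rw [hnK (N + 1) (by omega), hnK N (by omega)]
    have hWinj : ∀ u ∈ W, F u = 0 → u = 0 := by
      intro u hu hFu
      obtain ⟨z, hz⟩ := (mem_imChain Fl N u).mp hu
      have h1 : (⇑Fl)^[N + 1] z = 0 := by
        rw [Function.iterate_succ_apply', hz]
        exact hFu
      have h2 : z ∈ kerChain Fl (N + 1) := (mem_kerChain Fl (N + 1) z).mpr h1
      rw [hkerstab] at h2
      have h3 := (mem_kerChain Fl N z).mp h2
      rw [← hz, h3]
    -- restrict F to W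
    set G : W →+ W :=
      { toFun := fun u => ⟨F u.1, hWmem u.1 u.2⟩,
        map_zero' := Subtype.ext (map_zero F),
        map_add' := fun a b => Subtype.ext (map_add F a.1 b.1) } with hG
    have hGsc : ∀ (c : k) (u : W), G (c • u) = c ^ p • G u := by
      intro c u
      apply Subtype.ext
      show F (c • u.1) = c ^ p • F u.1
      exact hF c u.1
    have hGinj : ∀ u : W, G u = 0 → u = 0 := by
      intro u hu
      have h1 : F u.1 = 0 := congrArg Subtype.val hu
      exact Subtype.ext (hWinj u.1 u.2 h1)
    have hGsurj : Function.Surjective G := by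
      rintro ⟨w, hw⟩
      obtain ⟨u, hu, huw⟩ := hWsurj w hw
      exact ⟨⟨u, hu⟩, Subtype.ext huw⟩
    have hcount := key_count (Module.finrank k W) W G hGsc hGinj hGsurj rfl
    -- fixed points of F are exactly fixed points of G
    have hfixmem : ∀ v : V, F v = v → v ∈ W := by
      intro v hv
      rw [← SetLike.mem_coe, hWset]
      intro i
      refine ⟨v, ?_⟩
      induction i with
      | zero => rfl
      | succ i ih => rw [Function.iterate_succ_apply', ih, hv]
    have he : Nat.card {v : V // F v = v} = Nat.card {u : W // G u = u} := by
      apply Nat.card_congr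
      refine ⟨fun v => ⟨⟨v.1, hfixmem v.1 v.2⟩, Subtype.ext v.2⟩,
        fun u => ⟨u.1.1, congrArg Subtype.val u.2⟩, fun v => rfl, fun u => ?_⟩
      apply Subtype.ext
      apply Subtype.ext
      rfl
    exact ⟨W, hWset, by rw [he, hcount]⟩
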